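/- Let X₁,...,Xₙ be i.i.d. uniform on (0,1), c ∈ (0,1), r* = 1/max(c, 1-c), and let γₙ(r,c) be the domination number of the PICD with parameters r and c. Then as n → ∞: if r > r*, then γₙ(r,c) → 1 in probability; if 1 ≤ r < r*, then γₙ(r,c) → 2 in probability; and if r = r* with c ≠ 1/2, then γₙ(r*,c) - 1 converges in distribution to Bernoulli(r*/(r*+1)). -/

import Mathlib

open Set MeasureTheory Filter Topology

/-- The parameterized proximity region on `(0,1)`. -/
noncomputable def N01 (r c x : ℝ) : Set ℝ :=
  if x < c then Set.Ioo 0 (min 1 (r * x)) else Set.Ioo (max 0 (1 - r * (1 - x))) 1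

/-- The domination number of the digraph on vertices `X 0, …, X (n-1)` where `u` dominates
itself and every vertex lying in `N u`. -/
noncomputable def domNum (n : ℕ) (X : Fin n → ℝ) (N : ℝ → Set ℝ) : ℕ :=
  sInf {k | ∃ S : Finset (Fin n), S.card = k ∧
    ∀ j, ∃ i ∈ S, X j = X i ∨ X j ∈ N (X i)}

/-- The joint law of `n` i.i.d. uniform random variables on `(0,1)`. -/
noncomputable def unifPi (n : ℕ) : Measure (Fin n → ℝ) :=
  Measure.pi fun _ => volume.restrict (Set.Ioo (0:ℝ) 1)

open scoped ENNReal

section Combinatorial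

variable {n : ℕ} {X : Fin n → ℝ} {N : ℝ → Set ℝ}

def domSet (n : ℕ) (X : Fin n → ℝ) (N : ℝ → Set ℝ) : Set ℕ :=
  {k | ∃ S : Finset (Fin n), S.card = k ∧
    ∀ j, ∃ i ∈ S, X j = X i ∨ X j ∈ N (X i)}

lemma domNum_eq_sInf : domNum n X N = sInf (domSet n X N) := rfl

lemma zero_not_mem_domSet (hn : 0 < n) : 0 ∉ domSet n X N := by
  rintro ⟨S, hS0, hS⟩
  obtain ⟨i, hi, -⟩ := hS ⟨0, hn⟩
  simp [Finset.card_eq_zero.mp hS0] at hi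

lemma one_mem_domSet (i : Fin n) (h : ∀ j, X j = X i ∨ X j ∈ N (X i)) :
    1 ∈ domSet n X N :=
  ⟨{i}, Finset.card_singleton i, fun j => ⟨i, Finset.mem_singleton_self i, h j⟩⟩

lemma two_mem_domSet (i₁ i₂ : Fin n) (hne : i₁ ≠ i₂)
    (h : ∀ j, (X j = X i₁ ∨ X j ∈ N (X i₁)) ∨ (X j = X i₂ ∨ X j ∈ N (X i₂))) :
    2 ∈ domSet n X N := by
  refine ⟨{i₁, i₂}, ?_, fun j => ?_⟩
  · rw [Finset.card_insert_of_notMem (by simpa using hne), Finset.card_singleton]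
  · rcases h j with h' | h'
    · exact ⟨i₁, by simp, h'⟩
    · exact ⟨i₂, by simp, h'⟩

lemma domNum_eq_one_iff :
    domNum n X N = 1 ↔ 0 < n ∧ ∃ i, ∀ j, X j = X i ∨ X j ∈ N (X i) := by
  constructor
  · intro h
    have hn : 0 < n := by
      rcases Nat.eq_zero_or_pos n with h0 | h0
      · have : 0 ∈ domSet n X N :=
          ⟨∅, Finset.card_empty, fun j => absurd j.isLt (by omega)⟩
        have := Nat.sInf_le this
        rw [domNum_eq_sInf] at h; omega
      · exact h0
    refine ⟨hn, ?_⟩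
    have hne : (domSet n X N).Nonempty := by
      by_contra hemp
      rw [Set.not_nonempty_iff_eq_empty] at hemp
      rw [domNum_eq_sInf, hemp, Nat.sInf_empty] at h; omega
    have h1 : 1 ∈ domSet n X N := by rw [domNum_eq_sInf] at h; rw [← h]; exact Nat.sInf_mem hne
    obtain ⟨S, hS1, hS⟩ := h1
    obtain ⟨i, rfl⟩ := Finset.card_eq_one.mp hS1
    exact ⟨i, fun j => by obtain ⟨i', hi', h'⟩ := hS j; rwa [Finset.mem_singleton.mp hi'] at h'⟩
  · rintro ⟨hn, i, h⟩
    have h1 := one_mem_domSet i h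
    rw [domNum_eq_sInf]
    have hle := Nat.sInf_le h1
    have h0 := zero_not_mem_domSet (X := X) (N := N) hn
    have hmem := Nat.sInf_mem ⟨1, h1⟩
    rcases Nat.lt_or_ge (sInf (domSet n X N)) 1 with h' | h'
    · interval_cases h'' : sInf (domSet n X N) <;> simp_all
    · omega

lemma domNum_eq_two_iff :
    domNum n X N = 2 ↔ (¬ ∃ i, ∀ j, X j = X i ∨ X j ∈ N (X i)) ∧ 0 < n ∧
      ∃ i₁ i₂, i₁ ≠ i₂ ∧
        ∀ j, (X j = X i₁ ∨ X j ∈ N (X i₁)) ∨ (X j = X i₂ ∨ X j ∈ N (X i₂)) := by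
  constructor
  · intro h
    have hn : 0 < n := by
      rcases Nat.eq_zero_or_pos n with h0 | h0
      · have : 0 ∈ domSet n X N :=
          ⟨∅, Finset.card_empty, fun j => absurd j.isLt (by omega)⟩
        have := Nat.sInf_le this
        rw [domNum_eq_sInf] at h; omega
      · exact h0
    have hno1 : ¬ ∃ i, ∀ j, X j = X i ∨ X j ∈ N (X i) := by
      rintro ⟨i, hi⟩
      have := Nat.sInf_le (one_mem_domSet i hi)
      rw [domNum_eq_sInf] at h; omega
    refine ⟨hno1, hn, ?_⟩
    have hne : (domSet n X N).Nonempty := by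
      by_contra hemp
      rw [Set.not_nonempty_iff_eq_empty] at hemp
      rw [domNum_eq_sInf, hemp, Nat.sInf_empty] at h; omega
    have h2 : 2 ∈ domSet n X N := by rw [domNum_eq_sInf] at h; rw [← h]; exact Nat.sInf_mem hne
    obtain ⟨S, hS2, hS⟩ := h2
    obtain ⟨i₁, i₂, hne12, rfl⟩ := Finset.card_eq_two.mp hS2
    refine ⟨i₁, i₂, hne12, fun j => ?_⟩
    obtain ⟨i', hi', h'⟩ := hS j
    rcases Finset.mem_insert.mp hi' with h'' | h''
    · exact Or.inl (h'' ▸ h')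
    · exact Or.inr ((Finset.mem_singleton.mp h'') ▸ h')
  · rintro ⟨hno1, hn, i₁, i₂, hne12, h⟩
    have h2 := two_mem_domSet i₁ i₂ hne12 h
    rw [domNum_eq_sInf]
    have hle := Nat.sInf_le h2
    have h0 := zero_not_mem_domSet (X := X) (N := N) hn
    have hmem := Nat.sInf_mem ⟨2, h2⟩
    have h1 : sInf (domSet n X N) ≠ 1 := by
      intro h1
      rw [h1] at hmem
      obtain ⟨S, hS1, hS⟩ := hmem
      obtain ⟨i, rfl⟩ := Finset.card_eq_one.mp hS1
      exact hno1 ⟨i, fun j => by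
        obtain ⟨i', hi', h'⟩ := hS j; rwa [Finset.mem_singleton.mp hi'] at h'⟩
    have h0' : sInf (domSet n X N) ≠ 0 := fun h0' => h0 (h0' ▸ hmem)
    omega

end Combinatorial

section Geometry

variable {n : ℕ} {X : Fin n → ℝ} {r c : ℝ}

/-- A point below `c` with `1 ≤ r * x` dominates everything in `(0,1)`. -/
lemma dom_left_big (hc : 0 < c) (i : Fin n) (hi : X i < c) (hri : 1 ≤ r * X i)
    (hG : ∀ j, X j ∈ Ioo (0:ℝ) 1) : ∀ j, X j = X i ∨ X j ∈ N01 r c (X i) := by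
  intro j
  right
  rw [N01, if_pos hi, min_eq_left hri]
  exact hG j

/-- A point at or above `c` with `1 ≤ r * (1-x)` dominates everything in `(0,1)`. -/
lemma dom_right_big (i : Fin n) (hi : ¬ X i < c) (hri : 1 ≤ r * (1 - X i))
    (hG : ∀ j, X j ∈ Ioo (0:ℝ) 1) : ∀ j, X j = X i ∨ X j ∈ N01 r c (X i) := by
  intro j
  right
  rw [N01, if_neg hi, max_eq_left (by linarith)]
  exact hG j

/-- If `r*c < 1` and `r*(1-c) < 1` and there are sample points close to both ends,
no single point dominates. -/
lemma no_single_dominator (hc0 : 0 < c) (hc1 : c < 1) (hr : 1 ≤ r)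
    (hrc : r * c < 1) (hrc' : r * (1 - c) < 1)
    (hG : ∀ j, X j ∈ Ioo (0:ℝ) 1)
    (hw1 : ∃ j, r * c < X j ∧ X j < 1) (hw2 : ∃ j, 0 < X j ∧ X j < 1 - r * (1 - c)) :
    ¬ ∃ i, ∀ j, X j = X i ∨ X j ∈ N01 r c (X i) := by
  rintro ⟨i, hi⟩
  obtain ⟨j1, hj1, hj1'⟩ := hw1
  obtain ⟨j2, hj2, hj2'⟩ := hw2
  have hcrc : c ≤ r * c := le_mul_of_one_le_left hc0.le hr
  have hβc : 1 - r * (1 - c) ≤ c := by nlinarith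
  by_cases hlt : X i < c
  · rcases hi j1 with h | h
    · -- X j1 = X i < c ≤ r*c < X j1, contradiction
      linarith [hcrc]
    · rw [N01, if_pos hlt] at h
      have : X j1 < r * X i := lt_of_lt_of_le h.2 (min_le_right _ _)
      have : r * X i ≤ r * c := by nlinarith
      linarith
  · push_neg at hlt
    rcases hi j2 with h | h
    · linarith
    · rw [N01, if_neg (not_lt.mpr hlt)] at h
      have h1 : 1 - r * (1 - c) ≤ 1 - r * (1 - X i) := by nlinarith
      have := h.1
      have := le_max_right (0:ℝ) (1 - r * (1 - X i))
      linarith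

/-- If there are points on both sides of `c`, two points dominate. -/
lemma two_dominators (hr : 1 ≤ r)
    (hG : ∀ j, X j ∈ Ioo (0:ℝ) 1)
    (h1 : ∃ i, X i < c) (h2 : ∃ i, ¬ X i < c) :
    ∃ i₁ i₂, i₁ ≠ i₂ ∧
      ∀ j, (X j = X i₁ ∨ X j ∈ N01 r c (X i₁)) ∨ (X j = X i₂ ∨ X j ∈ N01 r c (X i₂)) := by
  classical
  obtain ⟨a, ha⟩ := h1
  obtain ⟨b, hb⟩ := h2
  have hsa : (Finset.univ.filter fun i => X i < c).Nonempty := ⟨a, by simp [ha]⟩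
  have hsb : (Finset.univ.filter fun i => ¬ X i < c).Nonempty :=
    ⟨b, by simp only [Finset.mem_filter, Finset.mem_univ, true_and]; exact hb⟩
  obtain ⟨i₁, hi₁m, hi₁max⟩ := Finset.exists_max_image _ X hsa
  obtain ⟨i₂, hi₂m, hi₂min⟩ := Finset.exists_min_image _ X hsb
  rw [Finset.mem_filter] at hi₁m hi₂m
  refine ⟨i₁, i₂, ?_, ?_⟩
  · rintro rfl; exact hi₂m.2 hi₁m.2
  · intro j
    by_cases hj : X j < c
    · left
      have hle : X j ≤ X i₁ := hi₁max j (by simp [hj])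
      rcases eq_or_lt_of_le hle with h | h
      · exact Or.inl h
      · right
        rw [N01, if_pos hi₁m.2]
        have h0 : 0 < X i₁ := lt_trans (hG j).1 h
        refine ⟨(hG j).1, lt_min (hG j).2 ?_⟩
        calc X j < X i₁ := h
        _ ≤ r * X i₁ := le_mul_of_one_le_left h0.le hr
    · right
      have hle : X i₂ ≤ X j := hi₂min j (by simp only [Finset.mem_filter, Finset.mem_univ, true_and]; exact hj)
      rcases eq_or_lt_of_le hle with h | h
      · exact Or.inl h.symm
      · right
        rw [N01, if_neg hi₂m.2]
        refine ⟨max_lt (hG j).1 ?_, (hG j).2⟩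
        have : 1 - r * (1 - X i₂) ≤ X i₂ := by nlinarith [(hG i₂).2]
        linarith

/-- Part 3 (right-heavy case `r*c = 1`): a point in `(c·max, c)` dominates. -/
lemma dom_of_E (hc0 : 0 < c) (hrc : r * c = 1) (i : Fin n)
    (hi : X i < c) (hall : ∀ j, c * X j < X i)
    (hG : ∀ j, X j ∈ Ioo (0:ℝ) 1) : ∀ j, X j = X i ∨ X j ∈ N01 r c (X i) := by
  intro j
  right
  rw [N01, if_pos hi]
  refine ⟨(hG j).1, lt_min (hG j).2 ?_⟩
  have : c * X j < X i := hall j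
  have hr0 : 0 < r := by nlinarith
  have : c * X j < c * (r * X i) := by rw [show c * (r * X i) = (r*c) * X i by ring, hrc]; linarith
  exact lt_of_mul_lt_mul_left this hc0.le

/-- Part 3 (right-heavy): a single dominator plus a point near `0` forces membership in `E`. -/
lemma E_of_dom (hc : 1/2 < c) (hc1 : c < 1) (hrc : r * c = 1) (i : Fin n)
    (hdom : ∀ j, X j = X i ∨ X j ∈ N01 r c (X i))
    (hG : ∀ j, X j ∈ Ioo (0:ℝ) 1)
    (hF : ∃ j, 0 < X j ∧ X j < 2 - r) :
    X i < c ∧ ∀ j, c * X j < X i := by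
  have hc0 : (0:ℝ) < c := by linarith
  have hr1 : 1 < r := by nlinarith
  obtain ⟨j0, hj0, hj0'⟩ := hF
  have h2rc : 2 - r < c := by nlinarith
  have hlt : X i < c := by
    by_contra hlt
    rcases hdom j0 with h | h
    · push_neg at hlt; linarith
    · rw [N01, if_neg hlt] at h
      push_neg at hlt
      have : 2 - r ≤ 1 - r * (1 - X i) := by nlinarith
      have := h.1
      have := le_max_right (0:ℝ) (1 - r * (1 - X i))
      linarith
  refine ⟨hlt, fun j => ?_⟩
  rcases hdom j with h | h
  · rw [h]
    have := (hG i).1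
    nlinarith
  · rw [N01, if_pos hlt] at h
    have : X j < r * X i := lt_of_lt_of_le h.2 (min_le_right _ _)
    calc c * X j < c * (r * X i) := by nlinarith
    _ = X i := by rw [show c * (r * X i) = (r*c) * X i by ring, hrc, one_mul]

/-- Part 3 (left-heavy case `r*(1-c) = 1`): membership in reflected `E` gives a dominator. -/
lemma dom_of_E' (hc1 : c < 1) (hrc : r * (1 - c) = 1) (i : Fin n)
    (hi : c < X i) (hall : ∀ j, X i < 1 - (1 - c) * (1 - X j))
    (hG : ∀ j, X j ∈ Ioo (0:ℝ) 1) : ∀ j, X j = X i ∨ X j ∈ N01 r c (X i) := by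
  intro j
  right
  rw [N01, if_neg (not_lt.mpr hi.le)]
  refine ⟨max_lt (hG j).1 ?_, (hG j).2⟩
  have h := hall j
  have hc1' : 0 < 1 - c := by linarith
  -- (1-c)*(1-X j) < 1 - X i  ⇒  1 - X j < r * (1 - X i)
  have h1 : (1 - c) * (1 - X j) < 1 - X i := by linarith
  have h2 : (1 - c) * (1 - X j) < (1 - c) * (r * (1 - X i)) := by
    rw [show (1-c) * (r * (1 - X i)) = (r * (1-c)) * (1 - X i) by ring, hrc, one_mul]; exact h1
  have h3 : 1 - X j < r * (1 - X i) := lt_of_mul_lt_mul_left h2 hc1'.le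
  linarith

/-- Part 3 (left-heavy): single dominator plus a point near `1` forces reflected `E`
(or the dominator sits exactly at `c`). -/
lemma E'_of_dom (hc0 : 0 < c) (hc : c < 1/2) (hrc : r * (1 - c) = 1) (i : Fin n)
    (hdom : ∀ j, X j = X i ∨ X j ∈ N01 r c (X i))
    (hG : ∀ j, X j ∈ Ioo (0:ℝ) 1)
    (hF : ∃ j, r - 1 < X j ∧ X j < 1) :
    X i = c ∨ (c < X i ∧ ∀ j, X i < 1 - (1 - c) * (1 - X j)) := by
  have hc1 : c < 1 := by linarith
  have hr1 : 1 < r := by nlinarith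
  have hc1' : (0:ℝ) < 1 - c := by linarith
  obtain ⟨j0, hj0, hj0'⟩ := hF
  have hrc2 : r - 1 = r * c := by nlinarith
  have hcr1 : c < r - 1 := by nlinarith
  have hge : ¬ X i < c := by
    intro hlt
    rcases hdom j0 with h | h
    · linarith
    · rw [N01, if_pos hlt] at h
      have : X j0 < r * X i := lt_of_lt_of_le h.2 (min_le_right _ _)
      have : r * X i < r * c := by nlinarith
      linarith
  push_neg at hge
  rcases eq_or_lt_of_le hge with h | hgt
  · exact Or.inl h.symm
  refine Or.inr ⟨hgt, fun j => ?_⟩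
  rcases hdom j with h | h
  · rw [h]
    have := (hG i).2
    nlinarith
  · rw [N01, if_neg (not_lt.mpr hge)] at h
    have h1 : 1 - r * (1 - X i) < X j := lt_of_le_of_lt (le_max_right _ _) h.1
    -- so 1 - X j < r (1 - X i) hence (1-c)(1-X j) < 1 - X i
    have h2 : (1 - c) * (1 - X j) < (1 - c) * (r * (1 - X i)) := by nlinarith
    have h3 : (1 - c) * (r * (1 - X i)) = 1 - X i := by
      rw [show (1-c) * (r * (1 - X i)) = (r * (1-c)) * (1 - X i) by ring, hrc, one_mul]
    linarith

end Geometry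

section MeasureBasics

noncomputable def nu : Measure ℝ := volume.restrict (Set.Ioo (0:ℝ) 1)

instance : IsProbabilityMeasure nu := by
  constructor
  rw [nu, Measure.restrict_apply MeasurableSet.univ, Set.univ_inter, Real.volume_Ioo]
  norm_num

instance (n : ℕ) : IsProbabilityMeasure (unifPi n) := by
  rw [show unifPi n = Measure.pi fun _ : Fin n => nu from rfl]
  infer_instance

lemma unifPi_all_mem {n : ℕ} (s : Set ℝ) :
    unifPi n {X | ∀ i, X i ∈ s} = (nu s) ^ n := by
  have : {X : Fin n → ℝ | ∀ i, X i ∈ s} = Set.pi Set.univ (fun _ => s) := by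
    ext X; simp [Set.mem_pi]
  rw [this, show unifPi n = Measure.pi fun _ : Fin n => nu from rfl, Measure.pi_pi,
    Finset.prod_const, Finset.card_univ, Fintype.card_fin]

lemma unifPi_G {n : ℕ} : unifPi n {X | ∀ i, X i ∈ Set.Ioo (0:ℝ) 1} = 1 := by
  rw [unifPi_all_mem]
  have : nu (Set.Ioo 0 1) = 1 := by
    rw [nu, Measure.restrict_apply measurableSet_Ioo, Set.inter_self, Real.volume_Ioo]
    norm_num
  rw [this, one_pow]

lemma nu_apply (s : Set ℝ) (hs : MeasurableSet s) : nu s = volume (s ∩ Set.Ioo 0 1) := by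
  rw [nu, Measure.restrict_apply hs]

/-- complement of `∃ i, X i ∈ I` inside G -/
lemma unifPi_not_exists {n : ℕ} (I : Set ℝ) (hI : MeasurableSet I) :
    unifPi n ({X | ∃ i, X i ∈ I}ᶜ ∩ {X | ∀ i, X i ∈ Set.Ioo (0:ℝ) 1})
      ≤ (volume (Set.Ioo 0 1 \ I)) ^ n := by
  have hsub : ({X : Fin n → ℝ | ∃ i, X i ∈ I}ᶜ ∩ {X | ∀ i, X i ∈ Set.Ioo (0:ℝ) 1})
      ⊆ {X | ∀ i, X i ∈ Set.Ioo 0 1 \ I} := by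
    rintro X ⟨hX1, hX2⟩ i
    exact ⟨hX2 i, fun h => hX1 ⟨i, h⟩⟩
  refine le_trans (measure_mono hsub) ?_
  rw [unifPi_all_mem]
  gcongr ?_ ^ _
  rw [nu_apply _ (measurableSet_Ioo.diff hI)]
  exact measure_mono Set.inter_subset_left

end MeasureBasics


section Core

variable {c : ℝ}

lemma ftc_aux (hc0 : 0 < c) (hc1 : c < 1) (n : ℕ) :
    ∫ t in c..1, ((1+c)*t - c)^n = (1 - c^(2*(n+1))) / ((n+1)*(1+c)) := by
  have hne : ((n:ℝ)+1) * (1+c) ≠ 0 := by positivity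
  have key : ∀ t ∈ Set.uIcc c 1, HasDerivAt
      (fun t => ((1+c)*t - c)^(n+1) / ((n+1)*(1+c))) (((1+c)*t - c)^n) t := by
    intro t _
    have h1 : HasDerivAt (fun t : ℝ => (1+c)*t - c) ((1+c)*1) t :=
      ((hasDerivAt_id t).const_mul (1+c)).sub_const c
    have h2 := (h1.pow (n+1)).div_const (((n:ℝ)+1)*(1+c))
    refine h2.congr_deriv ?_
    rw [div_eq_iff hne, Nat.add_sub_cancel]
    push_cast
    ring
  have hInt : IntervalIntegrable (fun t => ((1+c)*t - c)^n) volume c 1 :=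
    (((continuous_const.mul continuous_id).sub continuous_const).pow n).intervalIntegrable c 1
  rw [intervalIntegral.integral_eq_sub_of_hasDerivAt key hInt]
  have e1 : (1+c)*1 - c = 1 := by ring
  have e2 : (1+c)*c - c = c^2 := by ring
  rw [e1, e2, one_pow, ← pow_mul]
  ring_nf

lemma measure_maxslice {n : ℕ} (hc0 : 0 < c) (hc1 : c < 1)
    (A : ℝ → Set ℝ)
    (hm : MeasurableSet {p : ℝ × ℝ | p.2 ∈ A p.1})
    (hv : ∀ t ∈ Set.Ico c 1, nu (A t) = ENNReal.ofReal ((1+c)*t - c))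
    (k : Fin (n+1)) :
    unifPi (n+1) {X | (c ≤ X k ∧ X k < 1) ∧ ∀ j, j ≠ k → X j ∈ A (X k)}
      = ENNReal.ofReal ((1 - c^(2*(n+1))) / ((n+1)*(1+c))) := by
  classical
  have hmp := measurePreserving_piFinSuccAbove (fun _ : Fin (n+1) => nu) k
  set T : Set (ℝ × (Fin n → ℝ)) :=
    (Prod.fst ⁻¹' Set.Ico c 1) ∩ (⋂ j : Fin n, {p | p.2 j ∈ A p.1}) with hT
  have hTm : MeasurableSet T := by
    refine (measurable_fst measurableSet_Ico).inter (MeasurableSet.iInter fun j => ?_)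
    have : {p : ℝ × (Fin n → ℝ) | p.2 j ∈ A p.1} =
        (fun p : ℝ × (Fin n → ℝ) => (p.1, p.2 j)) ⁻¹' {q : ℝ × ℝ | q.2 ∈ A q.1} := rfl
    rw [this]
    exact hm.preimage (measurable_fst.prodMk ((measurable_pi_apply j).comp measurable_snd))
  have hpre : {X : Fin (n+1) → ℝ | (c ≤ X k ∧ X k < 1) ∧ ∀ j, j ≠ k → X j ∈ A (X k)}
      = (MeasurableEquiv.piFinSuccAbove (fun _ : Fin (n+1) => ℝ) k) ⁻¹' T := by
    ext X
    simp only [Set.mem_setOf_eq, Set.mem_preimage, hT, Set.mem_inter_iff, Set.mem_iInter,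
      Set.mem_preimage, Set.mem_Ico, MeasurableEquiv.piFinSuccAbove_apply]
    constructor
    · rintro ⟨h1, h2⟩
      exact ⟨h1, fun j => h2 _ (Fin.succAbove_ne k j)⟩
    · rintro ⟨h1, h2⟩
      refine ⟨h1, fun j hj => ?_⟩
      obtain ⟨z, rfl⟩ := Fin.exists_succAbove_eq hj
      exact h2 z
  rw [show unifPi (n+1) = Measure.pi fun _ : Fin (n+1) => nu from rfl, hpre,
    hmp.measure_preimage hTm.nullMeasurableSet, Measure.prod_apply hTm]
  have hslice : ∀ t : ℝ, (Measure.pi fun _ : Fin n => nu) (Prod.mk t ⁻¹' T)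
      = Set.indicator (Set.Ico c 1) (fun t => ENNReal.ofReal ((1+c)*t - c) ^ n) t := by
    intro t
    by_cases ht : t ∈ Set.Ico c 1
    · have : Prod.mk t ⁻¹' T = Set.pi Set.univ (fun _ : Fin n => A t) := by
        ext y
        simp [hT, ht, Set.mem_pi]
      rw [this, Measure.pi_pi, Set.indicator_of_mem ht]
      simp [hv t ht, Finset.prod_const]
    · have : Prod.mk t ⁻¹' T = ∅ := by
        ext y
        simp [hT, ht]
      rw [this, measure_empty, Set.indicator_of_notMem ht]
  rw [lintegral_congr hslice, lintegral_indicator measurableSet_Ico _]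
  rw [show nu = volume.restrict (Set.Ioo (0:ℝ) 1) from rfl,
    Measure.restrict_restrict measurableSet_Ico,
    show Set.Ico c 1 ∩ Set.Ioo (0:ℝ) 1 = Set.Ico c 1 from
      Set.inter_eq_left.mpr (fun x hx => ⟨lt_of_lt_of_le hc0 hx.1, hx.2⟩)]
  have hcongr : ∫⁻ t in Set.Ico c 1, ENNReal.ofReal ((1+c)*t - c) ^ n
      = ∫⁻ t in Set.Ico c 1, ENNReal.ofReal (((1+c)*t - c) ^ n) := by
    refine setLIntegral_congr_fun measurableSet_Ico (fun t ht => ?_)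
    rw [ENNReal.ofReal_pow]
    nlinarith [ht.1]
  rw [hcongr]
  have hInt : IntegrableOn (fun t => ((1+c)*t - c)^n) (Set.Ico c 1) volume :=
    ((((continuous_const.mul continuous_id).sub continuous_const).pow n).integrableOn_Icc).mono_set
      Set.Ico_subset_Icc_self
  have hnn : 0 ≤ᵐ[volume.restrict (Set.Ico c 1)] fun t => ((1+c)*t - c)^n := by
    refine (ae_restrict_iff' measurableSet_Ico).mpr (ae_of_all _ fun t ht => ?_)
    have : 0 ≤ (1+c)*t - c := by nlinarith [ht.1]
    positivity
  rw [← ofReal_integral_eq_lintegral_ofReal hInt hnn]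
  congr 1
  rw [MeasureTheory.integral_Ico_eq_integral_Ioo, ← MeasureTheory.integral_Ioc_eq_integral_Ioo,
    ← intervalIntegral.integral_of_le hc1.le]
  exact ftc_aux hc0 hc1 n

end Core

section Ecompl

variable {c : ℝ}

lemma nu_slice_lt (hc0 : 0 < c) (hc1 : c < 1) {t : ℝ} (ht : t ∈ Set.Ico c 1) :
    nu (Set.Ioc 0 (c*t) ∪ Set.Ico c t) = ENNReal.ofReal ((1+c)*t - c) := by
  have h1 : 0 < t := lt_of_lt_of_le hc0 ht.1
  have hct : c * t < c := by nlinarith [ht.2]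
  have hsub : Set.Ioc 0 (c*t) ∪ Set.Ico c t ⊆ Set.Ioo (0:ℝ) 1 := by
    rintro x (h | h)
    · exact ⟨h.1, lt_of_le_of_lt h.2 (by nlinarith [ht.2])⟩
    · exact ⟨lt_of_lt_of_le hc0 h.1, lt_trans h.2 ht.2⟩
  rw [nu_apply _ ((measurableSet_Ioc).union measurableSet_Ico),
    Set.inter_eq_left.mpr hsub]
  rw [measure_union (by
      rw [Set.disjoint_left]
      rintro x ⟨-, hx2⟩ ⟨hx3, -⟩
      linarith) measurableSet_Ico]
  rw [Real.volume_Ioc, Real.volume_Ico, ← ENNReal.ofReal_add (by nlinarith) (by linarith [ht.1])]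
  congr 1
  ring

lemma nu_slice_le (hc0 : 0 < c) (hc1 : c < 1) {t : ℝ} (ht : t ∈ Set.Ico c 1) :
    nu (Set.Ioc 0 (c*t) ∪ Set.Icc c t) = ENNReal.ofReal ((1+c)*t - c) := by
  have h1 : 0 < t := lt_of_lt_of_le hc0 ht.1
  have hct : c * t < c := by nlinarith [ht.2]
  have hsub : Set.Ioc 0 (c*t) ∪ Set.Icc c t ⊆ Set.Ioo (0:ℝ) 1 := by
    rintro x (h | h)
    · exact ⟨h.1, lt_of_le_of_lt h.2 (by nlinarith [ht.2])⟩
    · exact ⟨lt_of_lt_of_le hc0 h.1, lt_of_le_of_lt h.2 ht.2⟩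
  rw [nu_apply _ ((measurableSet_Ioc).union measurableSet_Icc),
    Set.inter_eq_left.mpr hsub]
  rw [measure_union (by
      rw [Set.disjoint_left]
      rintro x ⟨-, hx2⟩ ⟨hx3, -⟩
      linarith) measurableSet_Icc]
  rw [Real.volume_Ioc, Real.volume_Icc, ← ENNReal.ofReal_add (by nlinarith) (by linarith [ht.1])]
  congr 1
  ring

lemma slice_meas_lt :
    MeasurableSet {p : ℝ × ℝ | p.2 ∈ Set.Ioc 0 (c*p.1) ∪ Set.Ico c p.1} := by
  have : {p : ℝ × ℝ | p.2 ∈ Set.Ioc 0 (c*p.1) ∪ Set.Ico c p.1}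
      = ({p : ℝ × ℝ | 0 < p.2} ∩ {p | p.2 ≤ c * p.1}) ∪
        ({p | c ≤ p.2} ∩ {p | p.2 < p.1}) := by
    ext p; simp [Set.mem_Ioc, Set.mem_Ico]
  rw [this]
  exact (((measurableSet_lt measurable_const measurable_snd).inter
    (measurableSet_le measurable_snd (measurable_fst.const_mul c)))).union
    ((measurableSet_le measurable_const measurable_snd).inter
      (measurableSet_lt measurable_snd measurable_fst))

lemma slice_meas_le :
    MeasurableSet {p : ℝ × ℝ | p.2 ∈ Set.Ioc 0 (c*p.1) ∪ Set.Icc c p.1} := by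
  have : {p : ℝ × ℝ | p.2 ∈ Set.Ioc 0 (c*p.1) ∪ Set.Icc c p.1}
      = ({p : ℝ × ℝ | 0 < p.2} ∩ {p | p.2 ≤ c * p.1}) ∪
        ({p | c ≤ p.2} ∩ {p | p.2 ≤ p.1}) := by
    ext p; simp [Set.mem_Ioc, Set.mem_Icc]
  rw [this]
  exact (((measurableSet_lt measurable_const measurable_snd).inter
    (measurableSet_le measurable_snd (measurable_fst.const_mul c)))).union
    ((measurableSet_le measurable_const measurable_snd).inter
      (measurableSet_le measurable_snd measurable_fst))

/-- The exact measure of `Eᶜ ∩ G` for the critical case. -/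
lemma measure_Ecompl (hc0 : 0 < c) (hc1 : c < 1) (n : ℕ) :
    unifPi (n+1) ({X | ∃ i, X i < c ∧ ∀ j, c * X j < X i}ᶜ ∩
        {X | ∀ i, X i ∈ Set.Ioo (0:ℝ) 1})
      = ENNReal.ofReal ((1 - c^(2*(n+1))) / (1+c)) := by
  classical
  set B := ({X : Fin (n+1) → ℝ | ∃ i, X i < c ∧ ∀ j, c * X j < X i}ᶜ ∩
    {X | ∀ i, X i ∈ Set.Ioo (0:ℝ) 1}) with hB
  set Blt : Fin (n+1) → Set (Fin (n+1) → ℝ) := fun k =>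
    {X | (c ≤ X k ∧ X k < 1) ∧ ∀ j, j ≠ k → X j ∈ Set.Ioc 0 (c * X k) ∪ Set.Ico c (X k)}
    with hBlt
  set Ble : Fin (n+1) → Set (Fin (n+1) → ℝ) := fun k =>
    {X | (c ≤ X k ∧ X k < 1) ∧ ∀ j, j ≠ k → X j ∈ Set.Ioc 0 (c * X k) ∪ Set.Icc c (X k)}
    with hBle
  have hval : ∀ k, unifPi (n+1) (Blt k)
      = ENNReal.ofReal ((1 - c^(2*(n+1))) / ((n+1)*(1+c))) := fun k =>
    measure_maxslice hc0 hc1 _ slice_meas_lt (fun t ht => nu_slice_lt hc0 hc1 ht) k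
  have hval' : ∀ k, unifPi (n+1) (Ble k)
      = ENNReal.ofReal ((1 - c^(2*(n+1))) / ((n+1)*(1+c))) := fun k =>
    measure_maxslice hc0 hc1 _ slice_meas_le (fun t ht => nu_slice_le hc0 hc1 ht) k
  -- lower inclusion : ⋃ Blt ⊆ B
  have hlow : (⋃ k, Blt k) ⊆ B := by
    rintro X hX
    obtain ⟨k, ⟨⟨hk1, hk2⟩, hall⟩⟩ := Set.mem_iUnion.mp hX
    constructor
    · -- no E
      rintro ⟨i, hi1, hi2⟩
      have hik : i ≠ k := fun h => absurd hi1 (not_lt.mpr (h ▸ hk1))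
      rcases hall i hik with h | h
      · -- X i ≤ c * X k but c * X k < X i
        exact absurd (hi2 k) (not_lt.mpr h.2)
      · exact absurd hi1 (not_lt.mpr h.1)
    · intro j
      by_cases hjk : j = k
      · subst hjk; exact ⟨lt_of_lt_of_le hc0 hk1, hk2⟩
      · rcases hall j hjk with h | h
        · refine ⟨h.1, lt_of_le_of_lt h.2 ?_⟩
          nlinarith
        · exact ⟨lt_of_lt_of_le hc0 h.1, lt_trans h.2 hk2⟩
  -- upper inclusion : B ⊆ ⋃ Ble
  have hup : B ⊆ ⋃ k, Ble k := by
    rintro X ⟨hE, hG⟩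
    obtain ⟨k, -, hkmax⟩ := Finset.exists_max_image Finset.univ X ⟨0, Finset.mem_univ 0⟩
    have hkmax' : ∀ j, X j ≤ X k := fun j => hkmax j (Finset.mem_univ j)
    have hck : c ≤ X k := by
      by_contra hck
      push_neg at hck
      exact hE ⟨k, hck, fun j => lt_of_lt_of_le (by nlinarith [(hG j).1, (hG j).2]) (hkmax' j)⟩
    refine Set.mem_iUnion.mpr ⟨k, ⟨⟨hck, (hG k).2⟩, fun j hjk => ?_⟩⟩
    by_cases hjc : X j < c
    · left
      refine ⟨(hG j).1, ?_⟩
      by_contra hgt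
      push_neg at hgt
      exact hE ⟨j, hjc, fun j' => lt_of_le_of_lt (by nlinarith [hkmax' j']) hgt⟩
    · right
      exact ⟨not_lt.mp hjc, hkmax' j⟩
  -- measurability of Blt
  have hmlt : ∀ k, MeasurableSet (Blt k) := by
    intro k
    have : Blt k = ({X : Fin (n+1) → ℝ | c ≤ X k} ∩ {X | X k < 1}) ∩
        ⋂ j, ⋂ (_ : j ≠ k), ((fun X : Fin (n+1) → ℝ => (X k, X j)) ⁻¹'
          {p : ℝ × ℝ | p.2 ∈ Set.Ioc 0 (c*p.1) ∪ Set.Ico c p.1}) := by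
      ext X
      simp only [hBlt, Set.mem_setOf_eq, Set.mem_inter_iff, Set.mem_iInter, Set.mem_preimage]
    rw [this]
    refine (((measurableSet_le measurable_const (measurable_pi_apply k)).inter
      (measurableSet_lt (measurable_pi_apply k) measurable_const))).inter
      (MeasurableSet.iInter fun j => MeasurableSet.iInter fun _ => ?_)
    exact slice_meas_lt.preimage (by fun_prop)
  -- disjointness of Blt
  have hdisj : Pairwise (Function.onFun Disjoint Blt) := by
    intro k l hkl
    rw [Function.onFun, Set.disjoint_left]
    rintro X ⟨⟨hk1, -⟩, hkall⟩ ⟨⟨hl1, -⟩, hlall⟩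
    rcases hkall l (Ne.symm hkl) with h | h
    · rcases hlall k hkl with h' | h'
      · nlinarith [h.1, h'.1, h.2, h'.2]
      · nlinarith [h.2, h'.2, h.1, h'.1]
    · rcases hlall k hkl with h' | h'
      · nlinarith [h.2, h'.2, h.1, h'.1]
      · nlinarith [h.2, h'.2]
  have hcval : ((n:ℝ)+1) * ((1 - c^(2*(n+1))) / ((n+1)*(1+c))) = (1 - c^(2*(n+1))) / (1+c) := by
    have : ((n:ℝ)+1) ≠ 0 := by positivity
    field_simp
  have hcast : ((n+1 : ℕ) : ℝ≥0∞) = ENNReal.ofReal ((n:ℝ)+1) := by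
    rw [show ((n:ℝ)+1) = ((n+1:ℕ):ℝ) by push_cast; ring, ENNReal.ofReal_natCast]
  have hsum : ∑ k : Fin (n+1), unifPi (n+1) (Blt k)
      = ENNReal.ofReal ((1 - c^(2*(n+1))) / (1+c)) := by
    rw [Finset.sum_congr rfl (fun k _ => hval k), Finset.sum_const, Finset.card_univ,
      Fintype.card_fin, nsmul_eq_mul, hcast, ← ENNReal.ofReal_mul (by positivity), hcval]
  have hsum' : ∑ k : Fin (n+1), unifPi (n+1) (Ble k)
      = ENNReal.ofReal ((1 - c^(2*(n+1))) / (1+c)) := by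
    rw [Finset.sum_congr rfl (fun k _ => hval' k), Finset.sum_const, Finset.card_univ,
      Fintype.card_fin, nsmul_eq_mul, hcast, ← ENNReal.ofReal_mul (by positivity), hcval]
  refine le_antisymm ?_ ?_
  · calc unifPi (n+1) B ≤ unifPi (n+1) (⋃ k, Ble k) := measure_mono hup
    _ ≤ ∑' k, unifPi (n+1) (Ble k) := measure_iUnion_le _
    _ = ∑ k : Fin (n+1), unifPi (n+1) (Ble k) := tsum_fintype _
    _ = _ := hsum'
  · calc ENNReal.ofReal ((1 - c^(2*(n+1))) / (1+c))
        = ∑ k : Fin (n+1), unifPi (n+1) (Blt k) := hsum.symm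
    _ = ∑' k, unifPi (n+1) (Blt k) := (tsum_fintype _).symm
    _ = unifPi (n+1) (⋃ k, Blt k) := (measure_iUnion hdisj hmlt).symm
    _ ≤ unifPi (n+1) B := measure_mono hlow

end Ecompl

section Reflection

/-- The reflection `x ↦ 1 - x` preserves the uniform measure on `(0,1)`. -/
lemma measurePreserving_oneSub : MeasurePreserving (fun x : ℝ => 1 - x) nu nu := by
  have h1 : MeasurePreserving (fun x : ℝ => 1 - x) volume volume := by
    have := (Measure.measurePreserving_neg (volume : Measure ℝ)).comp
      (measurePreserving_add_left volume (-1))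
    have he : (fun x : ℝ => 1 - x) = (Neg.neg ∘ fun x : ℝ => -1 + x) := by
      funext x; simp; ring
    rw [he]
    exact (Measure.measurePreserving_neg volume).comp (measurePreserving_add_left volume (-1))
  constructor
  · exact h1.measurable
  · rw [show nu = volume.restrict (Set.Ioo (0:ℝ) 1) from rfl]
    have hpre : (fun x : ℝ => 1 - x) ⁻¹' Set.Ioo 0 1 = Set.Ioo 0 1 := by
      ext x
      simp only [Set.mem_preimage, Set.mem_Ioo]
      constructor <;> (rintro ⟨h1, h2⟩; constructor <;> linarith)
    rw [← hpre, ← Measure.restrict_map h1.measurable measurableSet_Ioo, h1.map_eq, hpre]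

noncomputable def flipn (n : ℕ) : (Fin n → ℝ) → (Fin n → ℝ) := fun X i => 1 - X i

lemma measurable_flipn (n : ℕ) : Measurable (flipn n) :=
  measurable_pi_iff.mpr fun i => measurable_const.sub (measurable_pi_apply i)

lemma measurePreserving_flipn (n : ℕ) : MeasurePreserving (flipn n) (unifPi n) (unifPi n) := by
  constructor
  · exact measurable_flipn n
  · have : unifPi n = Measure.map (flipn n) (unifPi n) := by
      rw [show unifPi n = Measure.pi fun _ : Fin n => nu from rfl]
      refine Measure.pi_eq fun s hs => ?_
      rw [Measure.map_apply (measurable_flipn n) (MeasurableSet.univ_pi hs)]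
      have : flipn n ⁻¹' Set.pi Set.univ s = Set.pi Set.univ
          (fun i => (fun x : ℝ => 1 - x) ⁻¹' (s i)) := by
        ext X; simp [flipn, Set.mem_pi]
      rw [this, Measure.pi_pi]
      exact Finset.prod_congr rfl fun i _ =>
        (measurePreserving_oneSub.measure_preimage (hs i).nullMeasurableSet)
    exact this.symm

end Reflection

section Helpers

lemma vol_diff_Ioo {a b : ℝ} (h0 : 0 ≤ a) (hab : a ≤ b) (hb : b ≤ 1) :
    (volume (Set.Ioo 0 1 \ Set.Ioo a b)).toReal = 1 - (b - a) := by
  have hsub : Set.Ioo a b ⊆ Set.Ioo (0:ℝ) 1 := fun x hx =>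
    ⟨lt_of_le_of_lt h0 hx.1, lt_of_lt_of_le hx.2 hb⟩
  rw [measure_diff hsub measurableSet_Ioo.nullMeasurableSet (by rw [Real.volume_Ioo]; exact ENNReal.ofReal_ne_top),
    Real.volume_Ioo, Real.volume_Ioo, ← ENNReal.ofReal_sub _ (by linarith),
    ENNReal.toReal_ofReal (by linarith)]
  norm_num

lemma meas_G {n : ℕ} : MeasurableSet {X : Fin n → ℝ | ∀ i, X i ∈ Set.Ioo (0:ℝ) 1} := by
  have : {X : Fin n → ℝ | ∀ i, X i ∈ Set.Ioo (0:ℝ) 1} =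
      ⋂ i, (fun X : Fin n → ℝ => X i) ⁻¹' Set.Ioo 0 1 := by
    ext X; simp
  rw [this]
  exact MeasurableSet.iInter fun i => measurableSet_Ioo.preimage (measurable_pi_apply i)

lemma unifPi_Gc {n : ℕ} : unifPi n {X : Fin n → ℝ | ∀ i, X i ∈ Set.Ioo (0:ℝ) 1}ᶜ = 0 := by
  rw [measure_compl meas_G (measure_ne_top _ _), unifPi_G, measure_univ, tsub_self]

lemma unifPi_diag {n : ℕ} (a : ℝ) : unifPi n {X : Fin n → ℝ | ∃ i, X i = a} = 0 := by
  have hsub : {X : Fin n → ℝ | ∃ i, X i = a} = {X : Fin n → ℝ | ∀ i, X i ∈ ({a}ᶜ : Set ℝ)}ᶜ := by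
    ext X; simp
  rw [hsub]
  have hm : MeasurableSet {X : Fin n → ℝ | ∀ i, X i ∈ ({a}ᶜ : Set ℝ)} := by
    have : {X : Fin n → ℝ | ∀ i, X i ∈ ({a}ᶜ : Set ℝ)} =
        ⋂ i, (fun X : Fin n → ℝ => X i) ⁻¹' {a}ᶜ := by ext X; simp
    rw [this]
    exact MeasurableSet.iInter fun i =>
      (measurableSet_singleton a).compl.preimage (measurable_pi_apply i)
  rw [measure_compl hm (measure_ne_top _ _), measure_univ, unifPi_all_mem]
  have : nu ({a}ᶜ) = 1 := by
    have h0 : nu {a} = 0 := by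
      refine le_antisymm ?_ zero_le
      rw [nu]
      exact le_trans (Measure.restrict_le_self _) (by simp)
    rw [measure_compl (measurableSet_singleton a) (measure_ne_top _ _), h0, measure_univ]
    simp
  rw [this, one_pow, tsub_self]

lemma toReal_le_one {n : ℕ} (D : Set (Fin n → ℝ)) : (unifPi n D).toReal ≤ 1 := by
  have := prob_le_one (μ := unifPi n) (s := D)
  exact le_trans (ENNReal.toReal_mono ENNReal.one_ne_top this) (by norm_num)

lemma toReal_mono' {n : ℕ} {A B : Set (Fin n → ℝ)} (h : A ⊆ B) :
    (unifPi n A).toReal ≤ (unifPi n B).toReal :=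
  ENNReal.toReal_mono (measure_ne_top _ _) (measure_mono h)

lemma toReal_le_add3 {n : ℕ} {A D B C : Set (Fin n → ℝ)} (h : A ⊆ D ∪ B ∪ C) :
    (unifPi n A).toReal ≤ (unifPi n D).toReal + (unifPi n B).toReal + (unifPi n C).toReal := by
  have h1 : unifPi n A ≤ unifPi n D + unifPi n B + unifPi n C :=
    le_trans (measure_mono h) (le_trans (measure_union_le _ _)
      (add_le_add (measure_union_le _ _) le_rfl))
  refine le_trans (ENNReal.toReal_mono ?_ h1) ?_
  · finiteness
  · rw [ENNReal.toReal_add (by finiteness) (by finiteness),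
      ENNReal.toReal_add (by finiteness) (by finiteness)]

/-- Bound `unifPi n (Fᶜ ∩ G)` in real terms where `F = {∃ i, X i ∈ Ioo a b}`. -/
lemma toReal_not_exists {n : ℕ} {a b : ℝ} (h0 : 0 ≤ a) (hab : a ≤ b) (hb : b ≤ 1) :
    (unifPi n ({X | ∃ i, X i ∈ Set.Ioo a b}ᶜ ∩ {X | ∀ i, X i ∈ Set.Ioo (0:ℝ) 1})).toReal
      ≤ (1 - (b - a))^n := by
  have hfin : volume (Set.Ioo (0:ℝ) 1 \ Set.Ioo a b) ≠ ⊤ := by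
    refine ((measure_mono Set.diff_subset).trans_lt ?_).ne
    rw [Real.volume_Ioo]; exact ENNReal.ofReal_lt_top
  refine le_trans (ENNReal.toReal_mono (ENNReal.pow_ne_top hfin)
    (unifPi_not_exists _ measurableSet_Ioo)) ?_
  rw [ENNReal.toReal_pow, vol_diff_Ioo h0 hab hb]

lemma tendsto_one_sub_pow {q : ℝ} (h0 : 0 ≤ q) (h1 : q < 1) :
    Filter.Tendsto (fun n : ℕ => 1 - q^n) Filter.atTop (nhds 1) := by
  have := tendsto_pow_atTop_nhds_zero_of_lt_one h0 h1
  have := Filter.Tendsto.const_sub (1:ℝ) this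
  simpa using this

end Helpers

section Parts

lemma meas_E {n : ℕ} (c : ℝ) :
    MeasurableSet {X : Fin n → ℝ | ∃ i, X i < c ∧ ∀ j, c * X j < X i} := by
  have : {X : Fin n → ℝ | ∃ i, X i < c ∧ ∀ j, c * X j < X i} =
      ⋃ i, ({X : Fin n → ℝ | X i < c} ∩ ⋂ j, {X | c * X j < X i}) := by
    ext X; simp [Set.mem_iUnion, Set.mem_iInter]
  rw [this]
  exact MeasurableSet.iUnion fun i =>
    ((measurableSet_lt (measurable_pi_apply i) measurable_const)).inter
      (MeasurableSet.iInter fun j =>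
        measurableSet_lt (by fun_prop) (measurable_pi_apply i))

lemma lower_via_exists {n : ℕ} {a b : ℝ} (h0 : 0 ≤ a) (hab : a ≤ b) (hb : b ≤ 1)
    {D : Set (Fin n → ℝ)}
    (hsub : {X | ∃ i, X i ∈ Set.Ioo a b} ∩ {X | ∀ i, X i ∈ Set.Ioo (0:ℝ) 1} ⊆ D) :
    1 - (1 - (b - a))^n ≤ (unifPi n D).toReal := by
  have hGsub : {X : Fin n → ℝ | ∀ i, X i ∈ Set.Ioo (0:ℝ) 1} ⊆
      D ∪ ({X | ∃ i, X i ∈ Set.Ioo a b}ᶜ ∩ {X | ∀ i, X i ∈ Set.Ioo (0:ℝ) 1}) ∪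
        (∅ : Set (Fin n → ℝ)) := by
    intro X hX
    by_cases hA : ∃ i, X i ∈ Set.Ioo a b
    · exact Or.inl (Or.inl (hsub ⟨hA, hX⟩))
    · exact Or.inl (Or.inr ⟨hA, hX⟩)
  have h1 := toReal_le_add3 hGsub
  have h2 := toReal_not_exists (n := n) h0 hab hb
  have h3 : (unifPi n {X : Fin n → ℝ | ∀ i, X i ∈ Set.Ioo (0:ℝ) 1}).toReal = 1 := by
    rw [unifPi_G]; simp
  have h4 : (unifPi n (∅ : Set (Fin n → ℝ))).toReal = 0 := by simp
  linarith

lemma lower_via_exists2 {n : ℕ} {a b a' b' : ℝ}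
    (h0 : 0 ≤ a) (hab : a ≤ b) (hb : b ≤ 1)
    (h0' : 0 ≤ a') (hab' : a' ≤ b') (hb' : b' ≤ 1)
    {D : Set (Fin n → ℝ)}
    (hsub : ∀ X : Fin n → ℝ, (∀ i, X i ∈ Set.Ioo (0:ℝ) 1) →
      (∃ i, X i ∈ Set.Ioo a b) → (∃ i, X i ∈ Set.Ioo a' b') → X ∈ D) :
    1 - (1 - (b - a))^n - (1 - (b' - a'))^n ≤ (unifPi n D).toReal := by
  have hGsub : {X : Fin n → ℝ | ∀ i, X i ∈ Set.Ioo (0:ℝ) 1} ⊆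
      D ∪ ({X | ∃ i, X i ∈ Set.Ioo a b}ᶜ ∩ {X | ∀ i, X i ∈ Set.Ioo (0:ℝ) 1}) ∪
        ({X | ∃ i, X i ∈ Set.Ioo a' b'}ᶜ ∩ {X | ∀ i, X i ∈ Set.Ioo (0:ℝ) 1}) := by
    intro X hX
    by_cases hA : ∃ i, X i ∈ Set.Ioo a b
    · by_cases hA' : ∃ i, X i ∈ Set.Ioo a' b'
      · exact Or.inl (Or.inl (hsub X hX hA hA'))
      · exact Or.inr ⟨hA', hX⟩
    · exact Or.inl (Or.inr ⟨hA, hX⟩)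
  have h1 := toReal_le_add3 hGsub
  have h2 := toReal_not_exists (n := n) h0 hab hb
  have h2' := toReal_not_exists (n := n) h0' hab' hb'
  have h3 : (unifPi n {X : Fin n → ℝ | ∀ i, X i ∈ Set.Ioo (0:ℝ) 1}).toReal = 1 := by
    rw [unifPi_G]; simp
  linarith

lemma part1_lemma {c r : ℝ} (hc0 : 0 < c) (hc1 : c < 1) (hr : 1 ≤ r)
    (hgt : 1 / max c (1 - c) < r) :
    Tendsto (fun n => (unifPi n {X | domNum n X (N01 r c) = 1}).toReal)
      atTop (𝓝 1) := by
  have hr0 : (0:ℝ) < r := by linarith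
  -- choose the good interval
  obtain ⟨a, b, h0, hab, hb, hdom⟩ :
      ∃ a b : ℝ, 0 ≤ a ∧ a < b ∧ b ≤ 1 ∧ ∀ (n : ℕ) (X : Fin n → ℝ),
        (∀ i, X i ∈ Set.Ioo (0:ℝ) 1) → (∃ i, X i ∈ Set.Ioo a b) →
          domNum n X (N01 r c) = 1 := by
    rcases le_total (1 - c) c with hcase | hcase
    · have hmax : max c (1 - c) = c := max_eq_left hcase
      rw [hmax] at hgt
      have hrc : 1 < r * c := by
        have := (div_lt_iff₀ hc0).mp hgt
        linarith
      refine ⟨1/r, c, by positivity, by rw [div_lt_iff₀ hr0]; linarith, hc1.le, ?_⟩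
      rintro n X hG ⟨i, hi1, hi2⟩
      refine (domNum_eq_one_iff).mpr ⟨i.pos, i, ?_⟩
      refine dom_left_big hc0 i hi2 ?_ hG
      have : 1/r < X i := hi1
      rw [div_lt_iff₀ hr0] at this
      nlinarith
    · have hmax : max c (1 - c) = 1 - c := max_eq_right hcase
      rw [hmax] at hgt
      have hc1' : (0:ℝ) < 1 - c := by
        rcases lt_or_ge 0 (1 - c) with h | h
        · exact h
        · exfalso
          have : max c (1-c) = c := max_eq_left (by linarith)
          nlinarith [hgt]
      have hrc : 1 < r * (1 - c) := by
        have := (div_lt_iff₀ hc1').mp hgt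
        linarith
      refine ⟨c, 1 - 1/r, hc0.le, ?_, by nlinarith [one_div_pos.mpr hr0], ?_⟩
      · have h : 1/r < 1 - c := by rw [div_lt_iff₀ hr0]; nlinarith
        linarith
      rintro n X hG ⟨i, hi1, hi2⟩
      refine (domNum_eq_one_iff).mpr ⟨i.pos, i, ?_⟩
      refine dom_right_big i (not_lt.mpr hi1.le) ?_ hG
      have : X i < 1 - 1/r := hi2
      have h2 : 1/r < 1 - X i := by linarith
      rw [div_lt_iff₀ hr0] at h2
      nlinarith
  refine tendsto_of_tendsto_of_tendsto_of_le_of_le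
    (tendsto_one_sub_pow (q := 1 - (b - a)) (by linarith) (by linarith))
    tendsto_const_nhds (fun n => ?_) (fun n => toReal_le_one _)
  exact lower_via_exists h0 hab.le hb fun X hX => hdom n X hX.2 hX.1

lemma part2_lemma {c r : ℝ} (hc0 : 0 < c) (hc1 : c < 1) (hr : 1 ≤ r)
    (hlt : r < 1 / max c (1 - c)) :
    Tendsto (fun n => (unifPi n {X | domNum n X (N01 r c) = 2}).toReal)
      atTop (𝓝 1) := by
  have hr0 : (0:ℝ) < r := by linarith
  have hmaxpos : (0:ℝ) < max c (1 - c) := lt_of_lt_of_le hc0 (le_max_left _ _)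
  have hrmax : r * max c (1 - c) < 1 := by
    rw [lt_div_iff₀ hmaxpos] at hlt
    linarith
  have hrc : r * c < 1 :=
    lt_of_le_of_lt (mul_le_mul_of_nonneg_left (le_max_left _ _) hr0.le) hrmax
  have hrc' : r * (1 - c) < 1 :=
    lt_of_le_of_lt (mul_le_mul_of_nonneg_left (le_max_right _ _) hr0.le) hrmax
  set β := 1 - r * (1 - c) with hβ
  have hβ0 : 0 < β := by rw [hβ]; linarith
  have hβc : β ≤ c := by rw [hβ]; nlinarith
  have hcrc : c ≤ r * c := le_mul_of_one_le_left hc0.le hr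
  -- inclusion into the event {domNum = 2}
  have hsub : ∀ (n : ℕ) (X : Fin n → ℝ), (∀ i, X i ∈ Set.Ioo (0:ℝ) 1) →
      (∃ i, X i ∈ Set.Ioo (r*c) 1) → (∃ i, X i ∈ Set.Ioo 0 β) →
      X ∈ {X : Fin n → ℝ | domNum n X (N01 r c) = 2} := by
    rintro n X hG ⟨j1, hj1⟩ ⟨j2, hj2⟩
    refine (domNum_eq_two_iff).mpr ⟨?_, j1.pos, ?_⟩
    · exact no_single_dominator hc0 hc1 hr hrc hrc' hG ⟨j1, hj1.1, hj1.2⟩ ⟨j2, hj2.1, hj2.2⟩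
    · refine two_dominators hr hG ⟨j2, by linarith [hj2.2]⟩ ⟨j1, not_lt.mpr (by linarith [hj1.1])⟩
  refine tendsto_of_tendsto_of_tendsto_of_le_of_le (f := fun n =>
      (unifPi n {X | domNum n X (N01 r c) = 2}).toReal)
    (g := fun n => 1 - (1 - (1 - r*c))^n - (1 - (β - 0))^n)
    ?_ tendsto_const_nhds (fun n => ?_) (fun n => toReal_le_one _)
  · have t1 : Tendsto (fun n : ℕ => (1 - (1 - r*c))^n) atTop (𝓝 0) := by
      refine tendsto_pow_atTop_nhds_zero_of_lt_one (by nlinarith) (by linarith)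
    have t2 : Tendsto (fun n : ℕ => (1 - (β - 0))^n) atTop (𝓝 0) := by
      refine tendsto_pow_atTop_nhds_zero_of_lt_one (by simp [hβ]; nlinarith) (by simp; linarith)
    have := (tendsto_const_nhds (x := (1:ℝ)) (f := atTop)).sub t1 |>.sub t2
    simpa using this
  · exact lower_via_exists2 (by nlinarith) (by linarith) le_rfl
      (le_refl 0) hβ0.le (by linarith) (hsub n)

end Parts

section Part3Right

lemma part3_right {c r : ℝ} (hc : 1/2 < c) (hc1 : c < 1) (hrc : r * c = 1) :
    Tendsto (fun n => (unifPi n {X | domNum n X (N01 r c) = 2}).toReal) atTop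
      (𝓝 (1/(1+c))) ∧
    Tendsto (fun n => (unifPi n {X | domNum n X (N01 r c) = 1}).toReal) atTop
      (𝓝 (1 - 1/(1+c))) := by
  have hc0 : (0:ℝ) < c := by linarith
  have hr1 : 1 < r := by nlinarith
  have hr2 : r < 2 := by nlinarith
  have hsq : (0:ℝ) < (1-c)^2 := pow_pos (by linarith) 2
  have h2rc : 2 - r < c := by nlinarith
  set Gs : (n : ℕ) → Set (Fin n → ℝ) := fun n => {X | ∀ i, X i ∈ Set.Ioo (0:ℝ) 1} with hGs
  set Es : (n : ℕ) → Set (Fin n → ℝ) :=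
    fun n => {X | ∃ i, X i < c ∧ ∀ j, c * X j < X i} with hEs
  set Fs : (n : ℕ) → Set (Fin n → ℝ) := fun n => {X | ∃ i, X i ∈ Set.Ioo 0 (2-r)} with hFs
  set Rs : (n : ℕ) → Set (Fin n → ℝ) := fun n => {X | ∃ i, X i ∈ Set.Ioo c 1} with hRs
  set P1 : ℕ → ℝ := fun n => (unifPi n {X | domNum n X (N01 r c) = 1}).toReal with hP1
  set P2 : ℕ → ℝ := fun n => (unifPi n {X | domNum n X (N01 r c) = 2}).toReal with hP2
  set w : ℕ → ℝ := fun n => (1 - c^(2*n))/(1+c) with hwdef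
  -- inclusions
  have incl1 : ∀ n, Es n ∩ Gs n ⊆ {X | domNum n X (N01 r c) = 1} := by
    rintro n X ⟨⟨i, hi1, hi2⟩, hG⟩
    exact (domNum_eq_one_iff).mpr ⟨i.pos, i, dom_of_E hc0 hrc i hi1 hi2 hG⟩
  have incl2 : ∀ n, {X | domNum n X (N01 r c) = 1} ⊆
      (Es n ∩ Gs n) ∪ ((Fs n)ᶜ ∩ Gs n) ∪ (Gs n)ᶜ := by
    intro n X hX
    by_cases hG : X ∈ Gs n
    · by_cases hF : X ∈ Fs n
      · obtain ⟨hpos, i, hdom⟩ := (domNum_eq_one_iff).mp hX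
        obtain ⟨j0, hj0⟩ := hF
        have := E_of_dom hc hc1 hrc i hdom hG ⟨j0, hj0.1, hj0.2⟩
        exact Or.inl (Or.inl ⟨⟨i, this.1, this.2⟩, hG⟩)
      · exact Or.inl (Or.inr ⟨hF, hG⟩)
    · exact Or.inr hG
  have incl3 : ∀ n, (Es n)ᶜ ∩ Gs n ⊆
      {X | domNum n X (N01 r c) = 2} ∪ ((Fs n)ᶜ ∩ Gs n) ∪ ((Rs n)ᶜ ∩ Gs n) := by
    rintro n X ⟨hE, hG⟩
    by_cases hF : X ∈ Fs n
    · by_cases hR : X ∈ Rs n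
      · obtain ⟨j1, hj1⟩ := hF
        obtain ⟨j2, hj2⟩ := hR
        refine Or.inl (Or.inl ((domNum_eq_two_iff).mpr ⟨?_, j1.pos, ?_⟩))
        · rintro ⟨i, hdom⟩
          have := E_of_dom hc hc1 hrc i hdom hG ⟨j1, hj1.1, hj1.2⟩
          exact hE ⟨i, this.1, this.2⟩
        · exact two_dominators hr1.le hG ⟨j1, by linarith [hj1.2]⟩
            ⟨j2, not_lt.mpr (by linarith [hj2.1])⟩
      · exact Or.inr ⟨hR, hG⟩
    · exact Or.inl (Or.inr ⟨hF, hG⟩)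
  have incl4 : ∀ n, {X | domNum n X (N01 r c) = 2} ⊆
      ((Es n)ᶜ ∩ Gs n) ∪ (Gs n)ᶜ ∪ (∅ : Set (Fin n → ℝ)) := by
    intro n X hX
    by_cases hG : X ∈ Gs n
    · obtain ⟨hno1, hpos, -⟩ := (domNum_eq_two_iff).mp hX
      refine Or.inl (Or.inl ⟨?_, hG⟩)
      rintro ⟨i, hi1, hi2⟩
      exact hno1 ⟨i, dom_of_E hc0 hrc i hi1 hi2 hG⟩
    · exact Or.inl (Or.inr hG)
  -- exact values
  have hw : ∀ n : ℕ, (unifPi (n+1) ((Es (n+1))ᶜ ∩ Gs (n+1))).toReal = w (n+1) := by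
    intro n
    rw [hEs, hGs, measure_Ecompl hc0 hc1 n, ENNReal.toReal_ofReal]
    have : c^(2*(n+1)) ≤ 1 := pow_le_one₀ hc0.le hc1.le
    have h1c : (0:ℝ) < 1 + c := by linarith
    exact div_nonneg (by linarith) h1c.le
  have hu : ∀ n : ℕ, (unifPi (n+1) (Es (n+1) ∩ Gs (n+1))).toReal = 1 - w (n+1) := by
    intro n
    have hsum := measure_inter_add_diff (μ := unifPi (n+1)) (Gs (n+1)) (meas_E (n := n+1) c)
    rw [Set.inter_comm, Set.diff_eq, Set.inter_comm (Gs (n+1)), hGs] at hsum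
    rw [unifPi_G] at hsum
    have := congrArg ENNReal.toReal hsum
    rw [ENNReal.toReal_add (measure_ne_top _ _) (measure_ne_top _ _)] at this
    simp only [ENNReal.toReal_one] at this
    have hw' := hw n
    rw [hEs, hGs] at hw' ⊢
    linarith
  -- error bounds
  have hFbound : ∀ n : ℕ, (unifPi n ((Fs n)ᶜ ∩ Gs n)).toReal ≤ (r - 1)^n := by
    intro n
    have := toReal_not_exists (n := n) (a := 0) (b := 2 - r) le_rfl (by linarith) (by linarith)
    rw [show 1 - (2 - r - 0) = r - 1 by ring] at this
    exact this
  have hRbound : ∀ n : ℕ, (unifPi n ((Rs n)ᶜ ∩ Gs n)).toReal ≤ c^n := by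
    intro n
    have := toReal_not_exists (n := n) (a := c) (b := 1) hc0.le hc1.le le_rfl
    rw [show 1 - (1 - c) = c by ring] at this
    exact this
  have hGc : ∀ n : ℕ, (unifPi n ((Gs n)ᶜ)).toReal = 0 := by
    intro n; rw [hGs, unifPi_Gc]; simp
  -- real bounds
  have b1low : ∀ n : ℕ, 1 - w (n+1) ≤ P1 (n+1) := by
    intro n
    rw [← hu n]
    exact toReal_mono' (incl1 (n+1))
  have b1up : ∀ n : ℕ, P1 (n+1) ≤ (1 - w (n+1)) + (r-1)^(n+1) := by
    intro n
    have h := toReal_le_add3 (incl2 (n+1))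
    rw [hu n, hGc (n+1)] at h
    have := hFbound (n+1)
    linarith
  have b2low : ∀ n : ℕ, w (n+1) - (r-1)^(n+1) - c^(n+1) ≤ P2 (n+1) := by
    intro n
    have h := toReal_le_add3 (incl3 (n+1))
    rw [hw n] at h
    have h2 := hFbound (n+1)
    have h3 := hRbound (n+1)
    linarith
  have b2up : ∀ n : ℕ, P2 (n+1) ≤ w (n+1) := by
    intro n
    have h := toReal_le_add3 (incl4 (n+1))
    rw [hw n, hGc (n+1)] at h
    simpa using h
  -- limits
  have tw : Tendsto (fun n : ℕ => w (n+1)) atTop (𝓝 (1/(1+c))) := by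
    have h1 : Tendsto (fun n : ℕ => (c^2)^(n+1)) atTop (𝓝 0) :=
      (tendsto_pow_atTop_nhds_zero_of_lt_one (sq_nonneg c) (by nlinarith)).comp
        (tendsto_add_atTop_nat 1)
    have h2 : (fun n : ℕ => w (n+1)) = fun n : ℕ => (1 - (c^2)^(n+1))/(1+c) := by
      funext n
      simp only [hwdef]
      rw [pow_mul]
    rw [h2]
    have := (tendsto_const_nhds (x := (1:ℝ)) (f := atTop (α := ℕ))).sub h1 |>.div_const (1+c)
    simpa using this
  have te1 : Tendsto (fun n : ℕ => (r-1)^(n+1)) atTop (𝓝 0) :=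
    (tendsto_pow_atTop_nhds_zero_of_lt_one (by linarith) (by linarith)).comp
      (tendsto_add_atTop_nat 1)
  have te2 : Tendsto (fun n : ℕ => c^(n+1)) atTop (𝓝 0) :=
    (tendsto_pow_atTop_nhds_zero_of_lt_one hc0.le hc1).comp (tendsto_add_atTop_nat 1)
  constructor
  · refine (tendsto_add_atTop_iff_nat 1).mp ?_
    refine tendsto_of_tendsto_of_tendsto_of_le_of_le (g := fun n => w (n+1) - (r-1)^(n+1) - c^(n+1))
      (h := fun n => w (n+1)) ?_ tw (fun n => b2low n) (fun n => b2up n)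
    have := (tw.sub te1).sub te2
    simpa using this
  · refine (tendsto_add_atTop_iff_nat 1).mp ?_
    refine tendsto_of_tendsto_of_tendsto_of_le_of_le (g := fun n => 1 - w (n+1))
      (h := fun n => (1 - w (n+1)) + (r-1)^(n+1)) ?_ ?_ (fun n => b1low n) (fun n => b1up n)
    · exact (tendsto_const_nhds (x := (1:ℝ)) (f := atTop (α := ℕ))).sub tw
    · have := ((tendsto_const_nhds (x := (1:ℝ)) (f := atTop (α := ℕ))).sub tw).add te1
      simpa using this

end Part3Right

section Part3Left

lemma part3_left {c r : ℝ} (hc0 : 0 < c) (hc : c < 1/2) (hrc : r * (1 - c) = 1) :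
    Tendsto (fun n => (unifPi n {X | domNum n X (N01 r c) = 2}).toReal) atTop
      (𝓝 (1/(1+(1-c)))) ∧
    Tendsto (fun n => (unifPi n {X | domNum n X (N01 r c) = 1}).toReal) atTop
      (𝓝 (1 - 1/(1+(1-c)))) := by
  have hc1 : c < 1 := by linarith
  have hc'0 : (0:ℝ) < 1 - c := by linarith
  have hc'h : (1:ℝ)/2 < 1 - c := by linarith
  have hc'1 : 1 - c < 1 := by linarith
  have hr1 : 1 < r := by nlinarith
  have hr2 : r < 2 := by nlinarith
  have hrc2 : r - 1 = r * c := by linear_combination hrc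
  have hcr1 : c < r - 1 := by nlinarith
  set Gs : (n : ℕ) → Set (Fin n → ℝ) := fun n => {X | ∀ i, X i ∈ Set.Ioo (0:ℝ) 1} with hGs
  set EY : (n : ℕ) → Set (Fin n → ℝ) :=
    fun n => {Y | ∃ i, Y i < 1 - c ∧ ∀ j, (1-c) * Y j < Y i} with hEY
  set Es : (n : ℕ) → Set (Fin n → ℝ) := fun n => (flipn n) ⁻¹' (EY n) with hEs
  set Fs : (n : ℕ) → Set (Fin n → ℝ) := fun n => {X | ∃ i, X i ∈ Set.Ioo (r-1) 1} with hFs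
  set Rs : (n : ℕ) → Set (Fin n → ℝ) := fun n => {X | ∃ i, X i ∈ Set.Ioo 0 c} with hRs
  set Zs : (n : ℕ) → Set (Fin n → ℝ) := fun n => {X | ∃ i, X i = c} with hZs
  set P1 : ℕ → ℝ := fun n => (unifPi n {X | domNum n X (N01 r c) = 1}).toReal with hP1
  set P2 : ℕ → ℝ := fun n => (unifPi n {X | domNum n X (N01 r c) = 2}).toReal with hP2
  set w : ℕ → ℝ := fun n => (1 - (1-c)^(2*n))/(1+(1-c)) with hwdef
  have hEmem : ∀ (n : ℕ) (X : Fin n → ℝ), X ∈ Es n ↔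
      ∃ i, 1 - X i < 1 - c ∧ ∀ j, (1-c) * (1 - X j) < 1 - X i := fun n X => Iff.rfl
  -- membership in Es gives a dominator
  have hEdom : ∀ (n : ℕ) (X : Fin n → ℝ), X ∈ Es n → X ∈ Gs n →
      ∃ i, ∀ j, X j = X i ∨ X j ∈ N01 r c (X i) := by
    rintro n X hX hG
    obtain ⟨i, hi1, hi2⟩ := (hEmem n X).mp hX
    exact ⟨i, dom_of_E' hc1 hrc i (by linarith) (fun j => by linarith [hi2 j]) hG⟩
  -- a dominator plus a point near 1 forces Es or Zs
  have hdomE : ∀ (n : ℕ) (X : Fin n → ℝ), X ∈ Gs n → X ∈ Fs n →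
      (∃ i, ∀ j, X j = X i ∨ X j ∈ N01 r c (X i)) → X ∈ Zs n ∨ X ∈ Es n := by
    rintro n X hG ⟨j0, hj0⟩ ⟨i, hdom⟩
    rcases E'_of_dom hc0 hc hrc i hdom hG ⟨j0, hj0.1, hj0.2⟩ with h | h
    · exact Or.inl ⟨i, h⟩
    · exact Or.inr ((hEmem n X).mpr ⟨i, by linarith [h.1], fun j => by linarith [h.2 j]⟩)
  -- preimage identities
  have hGflip : ∀ n, (flipn n) ⁻¹' (Gs n) = Gs n := by
    intro n
    ext X
    simp only [Set.mem_preimage, hGs, Set.mem_setOf_eq, flipn, Set.mem_Ioo]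
    constructor <;> intro h i <;> exact ⟨by linarith [(h i).2], by linarith [(h i).1]⟩
  have hpre : ∀ n, (Es n)ᶜ ∩ Gs n = (flipn n) ⁻¹' ((EY n)ᶜ ∩ Gs n) := by
    intro n
    rw [Set.preimage_inter, Set.preimage_compl, hGflip n, hEs]
  have hEsm : ∀ n, MeasurableSet (Es n) := fun n => (meas_E (1-c)).preimage (measurable_flipn n)
  -- exact values
  have hw : ∀ n : ℕ, (unifPi (n+1) ((Es (n+1))ᶜ ∩ Gs (n+1))).toReal = w (n+1) := by
    intro n
    rw [hpre (n+1),
      (measurePreserving_flipn (n+1)).measure_preimage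
        (((meas_E (1-c)).compl.inter meas_G).nullMeasurableSet),
      measure_Ecompl hc'0 hc'1 n, ENNReal.toReal_ofReal]
    have h1 : (1-c)^(2*(n+1)) ≤ 1 := pow_le_one₀ hc'0.le hc'1.le
    exact div_nonneg (by linarith) (by linarith)
  have hu : ∀ n : ℕ, (unifPi (n+1) (Es (n+1) ∩ Gs (n+1))).toReal = 1 - w (n+1) := by
    intro n
    have hsum := measure_inter_add_diff (μ := unifPi (n+1)) (Gs (n+1)) (hEsm (n+1))
    rw [Set.inter_comm, Set.diff_eq, Set.inter_comm (Gs (n+1)), hGs] at hsum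
    rw [unifPi_G] at hsum
    have := congrArg ENNReal.toReal hsum
    rw [ENNReal.toReal_add (measure_ne_top _ _) (measure_ne_top _ _)] at this
    simp only [ENNReal.toReal_one] at this
    have hw' := hw n
    rw [hGs] at hw' ⊢
    linarith
  -- inclusions
  have incl1 : ∀ n, Es n ∩ Gs n ⊆ {X | domNum n X (N01 r c) = 1} := by
    rintro n X ⟨hE, hG⟩
    obtain ⟨i, hdom⟩ := hEdom n X hE hG
    exact (domNum_eq_one_iff).mpr ⟨i.pos, i, hdom⟩
  have incl2 : ∀ n, {X | domNum n X (N01 r c) = 1} ⊆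
      (Es n ∩ Gs n) ∪ ((Fs n)ᶜ ∩ Gs n) ∪ ((Gs n)ᶜ ∪ Zs n) := by
    intro n X hX
    by_cases hG : X ∈ Gs n
    · by_cases hF : X ∈ Fs n
      · obtain ⟨hpos, i, hdom⟩ := (domNum_eq_one_iff).mp hX
        rcases hdomE n X hG hF ⟨i, hdom⟩ with h | h
        · exact Or.inr (Or.inr h)
        · exact Or.inl (Or.inl ⟨h, hG⟩)
      · exact Or.inl (Or.inr ⟨hF, hG⟩)
    · exact Or.inr (Or.inl hG)
  have incl3 : ∀ n, (Es n)ᶜ ∩ Gs n ⊆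
      {X | domNum n X (N01 r c) = 2} ∪ ((Fs n)ᶜ ∩ Gs n) ∪ (((Rs n)ᶜ ∩ Gs n) ∪ Zs n) := by
    rintro n X ⟨hE, hG⟩
    by_cases hZ : X ∈ Zs n
    · exact Or.inr (Or.inr hZ)
    by_cases hF : X ∈ Fs n
    · by_cases hR : X ∈ Rs n
      · obtain ⟨j1, hj1⟩ := hF
        obtain ⟨j2, hj2⟩ := hR
        refine Or.inl (Or.inl ((domNum_eq_two_iff).mpr ⟨?_, j1.pos, ?_⟩))
        · intro hdom
          rcases hdomE n X hG ⟨j1, hj1⟩ hdom with h | h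
          · exact hZ h
          · exact hE h
        · exact two_dominators hr1.le hG ⟨j2, by linarith [hj2.2]⟩
            ⟨j1, not_lt.mpr (by linarith [hj1.1])⟩
      · exact Or.inr (Or.inl ⟨hR, hG⟩)
    · exact Or.inl (Or.inr ⟨hF, hG⟩)
  have incl4 : ∀ n, {X | domNum n X (N01 r c) = 2} ⊆
      ((Es n)ᶜ ∩ Gs n) ∪ (Gs n)ᶜ ∪ (∅ : Set (Fin n → ℝ)) := by
    intro n X hX
    by_cases hG : X ∈ Gs n
    · obtain ⟨hno1, hpos, -⟩ := (domNum_eq_two_iff).mp hX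
      refine Or.inl (Or.inl ⟨?_, hG⟩)
      intro hE
      exact hno1 (hEdom n X hE hG)
    · exact Or.inl (Or.inr hG)
  -- error bounds
  have hFbound : ∀ n : ℕ, (unifPi n ((Fs n)ᶜ ∩ Gs n)).toReal ≤ (r - 1)^n := by
    intro n
    have := toReal_not_exists (n := n) (a := r-1) (b := 1) (by linarith) (by linarith) le_rfl
    rw [show 1 - (1 - (r-1)) = r - 1 by ring] at this
    exact this
  have hRbound : ∀ n : ℕ, (unifPi n ((Rs n)ᶜ ∩ Gs n)).toReal ≤ (1-c)^n := by
    intro n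
    have := toReal_not_exists (n := n) (a := 0) (b := c) le_rfl hc0.le hc1.le
    rw [show 1 - (c - 0) = 1 - c by ring] at this
    exact this
  have hGcZ : ∀ n : ℕ, (unifPi n ((Gs n)ᶜ ∪ Zs n)).toReal = 0 := by
    intro n
    rw [measure_union_null (by rw [hGs]; exact unifPi_Gc) (by rw [hZs]; exact unifPi_diag c)]
    simp
  have hGc : ∀ n : ℕ, (unifPi n ((Gs n)ᶜ)).toReal = 0 := by
    intro n; rw [hGs, unifPi_Gc]; simp
  have hRZbound : ∀ n : ℕ, (unifPi n (((Rs n)ᶜ ∩ Gs n) ∪ Zs n)).toReal ≤ (1-c)^n := by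
    intro n
    have h1 : unifPi n (((Rs n)ᶜ ∩ Gs n) ∪ Zs n) ≤ unifPi n ((Rs n)ᶜ ∩ Gs n) := by
      refine le_trans (measure_union_le _ _) ?_
      rw [hZs, unifPi_diag c, add_zero]
    exact le_trans (ENNReal.toReal_mono (measure_ne_top _ _) h1) (hRbound n)
  -- real bounds
  have b1low : ∀ n : ℕ, 1 - w (n+1) ≤ P1 (n+1) := by
    intro n
    rw [← hu n]
    exact toReal_mono' (incl1 (n+1))
  have b1up : ∀ n : ℕ, P1 (n+1) ≤ (1 - w (n+1)) + (r-1)^(n+1) := by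
    intro n
    have h := toReal_le_add3 (incl2 (n+1))
    rw [hu n, hGcZ (n+1)] at h
    have := hFbound (n+1)
    linarith
  have b2low : ∀ n : ℕ, w (n+1) - (r-1)^(n+1) - (1-c)^(n+1) ≤ P2 (n+1) := by
    intro n
    have h := toReal_le_add3 (incl3 (n+1))
    rw [hw n] at h
    have h2 := hFbound (n+1)
    have h3 := hRZbound (n+1)
    linarith
  have b2up : ∀ n : ℕ, P2 (n+1) ≤ w (n+1) := by
    intro n
    have h := toReal_le_add3 (incl4 (n+1))
    rw [hw n, hGc (n+1)] at h
    simpa using h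
  -- limits
  have tw : Tendsto (fun n : ℕ => w (n+1)) atTop (𝓝 (1/(1+(1-c)))) := by
    have h1 : Tendsto (fun n : ℕ => ((1-c)^2)^(n+1)) atTop (𝓝 0) :=
      (tendsto_pow_atTop_nhds_zero_of_lt_one (sq_nonneg _) (by nlinarith)).comp
        (tendsto_add_atTop_nat 1)
    have h2 : (fun n : ℕ => w (n+1)) = fun n : ℕ => (1 - ((1-c)^2)^(n+1))/(1+(1-c)) := by
      funext n
      simp only [hwdef]
      rw [pow_mul]
    rw [h2]
    have := (tendsto_const_nhds (x := (1:ℝ)) (f := atTop (α := ℕ))).sub h1 |>.div_const (1+(1-c))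
    simpa using this
  have te1 : Tendsto (fun n : ℕ => (r-1)^(n+1)) atTop (𝓝 0) :=
    (tendsto_pow_atTop_nhds_zero_of_lt_one (by linarith) (by linarith)).comp
      (tendsto_add_atTop_nat 1)
  have te2 : Tendsto (fun n : ℕ => (1-c)^(n+1)) atTop (𝓝 0) :=
    (tendsto_pow_atTop_nhds_zero_of_lt_one hc'0.le hc'1).comp (tendsto_add_atTop_nat 1)
  constructor
  · refine (tendsto_add_atTop_iff_nat 1).mp ?_
    refine tendsto_of_tendsto_of_tendsto_of_le_of_le
      (g := fun n => w (n+1) - (r-1)^(n+1) - (1-c)^(n+1))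
      (h := fun n => w (n+1)) ?_ tw (fun n => b2low n) (fun n => b2up n)
    have := (tw.sub te1).sub te2
    simpa using this
  · refine (tendsto_add_atTop_iff_nat 1).mp ?_
    refine tendsto_of_tendsto_of_tendsto_of_le_of_le (g := fun n => 1 - w (n+1))
      (h := fun n => (1 - w (n+1)) + (r-1)^(n+1)) ?_ ?_ (fun n => b1low n) (fun n => b1up n)
    · exact (tendsto_const_nhds (x := (1:ℝ)) (f := atTop (α := ℕ))).sub tw
    · have := ((tendsto_const_nhds (x := (1:ℝ)) (f := atTop (α := ℕ))).sub tw).add te1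
      simpa using this

end Part3Left


/-- Asymptotics of the domination number for uniform data: with
`r* = 1/max(c,1-c)`, as `n → ∞`, `γₙ(r,c) → 1` in probability if `r > r*`,
`γₙ(r,c) → 2` in probability if `1 ≤ r < r*`, and for `r = r*` with `c ≠ 1/2`,
`γₙ(r*,c) - 1` converges in distribution to `Bernoulli(r*/(r*+1))`. -/
theorem picd_domNum_asymptotics (c r : ℝ) (hc : c ∈ Set.Ioo (0:ℝ) 1) (hr : 1 ≤ r) :
    (1 / max c (1 - c) < r →
      Tendsto (fun n => (unifPi n {X | domNum n X (N01 r c) = 1}).toReal)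
        atTop (𝓝 1)) ∧
    (r < 1 / max c (1 - c) →
      Tendsto (fun n => (unifPi n {X | domNum n X (N01 r c) = 2}).toReal)
        atTop (𝓝 1)) ∧
    (r = 1 / max c (1 - c) → c ≠ 1/2 →
      Tendsto (fun n => (unifPi n {X | domNum n X (N01 r c) = 2}).toReal)
        atTop (𝓝 ((1 / max c (1 - c)) / (1 / max c (1 - c) + 1))) ∧
      Tendsto (fun n => (unifPi n {X | domNum n X (N01 r c) = 1}).toReal)
        atTop (𝓝 (1 - (1 / max c (1 - c)) / (1 / max c (1 - c) + 1)))) := by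
  obtain ⟨hc0, hc1⟩ := hc
  refine ⟨fun hgt => part1_lemma hc0 hc1 hr hgt, fun hlt => part2_lemma hc0 hc1 hr hlt, ?_⟩
  intro heq hne
  rcases lt_or_gt_of_ne hne with hlt | hgt
  · have hmax : max c (1 - c) = 1 - c := max_eq_right (by linarith)
    have h1c : (1:ℝ) - c ≠ 0 := by linarith
    have hrc : r * (1 - c) = 1 := by
      rw [heq, hmax]; field_simp
    have h := part3_left hc0 hlt hrc
    have hval : 1 / max c (1-c) / (1 / max c (1-c) + 1) = 1/(1+(1-c)) := by
      have h2c : (1:ℝ) + (1 - c) ≠ 0 := by linarith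
      rw [hmax]
      field_simp
    rw [hval]
    exact h
  · have hmax : max c (1 - c) = c := max_eq_left (by linarith)
    have hcne : c ≠ 0 := by linarith
    have hrc : r * c = 1 := by
      rw [heq, hmax]; field_simp
    have h := part3_right hgt hc1 hrc
    have hval : 1 / max c (1-c) / (1 / max c (1-c) + 1) = 1/(1+c) := by
      have h2c : (1:ℝ) + c ≠ 0 := by linarith
      rw [hmax]
      field_simp
    rw [hval]
    exact h
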